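/- The dual cone of C = {x ∈ ℝ^r_+ : eᵀx ≥ √(r-1)·‖x‖₂} is C* = {y ∈ ℝ^r : eᵀy ≥ ‖y‖₂}. -/

import Mathlib

lemma sum_aff1 {r : ℕ} (a b : ℝ) (x : Fin r → ℝ) :
    ∑ i, (a - b * x i) = (r:ℝ) * a - b * ∑ i, x i := by
  rw [Finset.sum_sub_distrib, ← Finset.mul_sum, Finset.sum_const, Finset.card_univ,
    Fintype.card_fin, nsmul_eq_mul]

lemma sum_aff2 {r : ℕ} (a b : ℝ) (x : Fin r → ℝ) :
    ∑ i, (a - b * x i) ^ 2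
      = (r:ℝ) * a ^ 2 - 2 * a * b * ∑ i, x i + b ^ 2 * ∑ i, x i ^ 2 := by
  have e : ∀ i : Fin r, (a - b * x i) ^ 2
      = a ^ 2 - 2 * a * b * x i + b ^ 2 * x i ^ 2 := fun i => by ring
  rw [Finset.sum_congr rfl fun i _ => e i, Finset.sum_add_distrib, Finset.sum_sub_distrib,
    ← Finset.mul_sum, ← Finset.mul_sum, Finset.sum_const, Finset.card_univ,
    Fintype.card_fin, nsmul_eq_mul]

lemma sum_aff3 {r : ℕ} (a b : ℝ) (x : Fin r → ℝ) :
    ∑ i, (a - b * x i) * x i = a * ∑ i, x i - b * ∑ i, x i ^ 2 := by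
  have e : ∀ i : Fin r, (a - b * x i) * x i = a * x i - b * x i ^ 2 := fun i => by ring
  rw [Finset.sum_congr rfl fun i _ => e i, Finset.sum_sub_distrib,
    ← Finset.mul_sum, ← Finset.mul_sum]
open BigOperators Finset RealInnerProductSpace

lemma dual_sub {r : ℕ} (hr : 1 ≤ r) (x : Fin r → ℝ)
    (hx : ∀ y : Fin r → ℝ, Real.sqrt (∑ i, y i ^ 2) ≤ ∑ i, y i → 0 ≤ ∑ i, y i * x i) :
    (∀ i, 0 ≤ x i) ∧ Real.sqrt ((r:ℝ) - 1) * Real.sqrt (∑ i, x i ^ 2) ≤ ∑ i, x i := by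
  have hpos : ∀ i, 0 ≤ x i := by
    intro i
    have h := hx (fun j => if j = i then 1 else 0) ?_
    · simpa using h
    · have e1 : ∑ j, (if j = i then (1:ℝ) else 0) ^ 2 = 1 := by simp [ite_pow]
      have e2 : ∑ j, (if j = i then (1:ℝ) else 0) = 1 := by simp
      rw [e1, e2, Real.sqrt_one]
  refine ⟨hpos, ?_⟩
  set s := ∑ i, x i with hsdef
  set q := ∑ i, x i ^ 2 with hqdef
  have hq0 : 0 ≤ q := Finset.sum_nonneg fun i _ => sq_nonneg _
  have hs0 : 0 ≤ s := Finset.sum_nonneg fun i _ => hpos i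
  have h1 : (0:ℝ) ≤ (r:ℝ) - 1 := by
    have : (1:ℝ) ≤ (r:ℝ) := by exact_mod_cast hr
    linarith
  have hx' := hx
  by_contra hcon
  push_neg at hcon
  have hlt : s ^ 2 < ((r:ℝ) - 1) * q := by
    by_contra h2
    push_neg at h2
    have e : Real.sqrt ((r:ℝ) - 1) * Real.sqrt q = Real.sqrt (((r:ℝ)-1) * q) :=
      (Real.sqrt_mul h1 q).symm
    have h3 : Real.sqrt (((r:ℝ)-1) * q) ≤ s := by
      rw [show s = Real.sqrt (s^2) by rw [Real.sqrt_sq hs0]]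
      exact Real.sqrt_le_sqrt h2
    rw [e] at hcon
    linarith
  have hr1 : (0:ℝ) < (r:ℝ) - 1 := by
    rcases eq_or_lt_of_le h1 with h | h
    · exfalso; rw [← h] at hlt; nlinarith [sq_nonneg s]
    · exact h
  have hr0 : (0:ℝ) < (r:ℝ) := by linarith
  have hqpos : 0 < q := by nlinarith [sq_nonneg s]
  have hspos : 0 < s := by
    rcases eq_or_lt_of_le hs0 with h | h
    · exfalso
      have hx0 : ∀ i, x i = 0 := by
        intro i
        have := Finset.sum_eq_zero_iff_of_nonneg (fun i _ => hpos i) |>.mp h.symm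
        exact this i (Finset.mem_univ i)
      have hq : q = 0 := by rw [hqdef]; exact Finset.sum_eq_zero fun i _ => by rw [hx0 i]; ring
      rw [hq] at hqpos; exact lt_irrefl 0 hqpos
    · exact h
  have hApos : 0 < ((r:ℝ) - 1) * ((r:ℝ) * q - s ^ 2) := by nlinarith
  set w := Real.sqrt (((r:ℝ) - 1) * ((r:ℝ) * q - s ^ 2)) with hwdef
  have hw2 : w ^ 2 = ((r:ℝ) - 1) * ((r:ℝ) * q - s ^ 2) := Real.sq_sqrt hApos.le
  have hw0 : 0 < w := Real.sqrt_pos.mpr hApos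
  have hsw : s < w := by nlinarith
  set T := ((r:ℝ) - 1) * s + w with hTdef
  set c := (r:ℝ) * ((r:ℝ) - 1) with hcdef
  set y : Fin r → ℝ := fun i => T - c * x i with hydef
  have hSy : ∑ i, y i = (r:ℝ) * T - c * s := by
    simp only [hydef]; rw [sum_aff1, ← hsdef]
  have hQy : ∑ i, y i ^ 2 = (r:ℝ) * T ^ 2 - 2 * T * c * s + c ^ 2 * q := by
    simp only [hydef]; rw [sum_aff2, ← hsdef, ← hqdef]
  have hiv : ∑ i, y i * x i = T * s - c * q := by
    simp only [hydef]; rw [sum_aff3, ← hsdef, ← hqdef]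
  clear hwdef hcon hx hpos
  clear_value s q w T c y
  subst hTdef hcdef
  have hSy0 : 0 ≤ ∑ i, y i := by
    rw [hSy]
    nlinarith [mul_pos hr0 hw0]
  have hmem : Real.sqrt (∑ i, y i ^ 2) ≤ ∑ i, y i := by
    have hsq : ∑ i, y i ^ 2 = (∑ i, y i) ^ 2 := by
      rw [hSy, hQy]
      linear_combination (-(r:ℝ) * ((r:ℝ) - 1)) * hw2
    rw [hsq, Real.sqrt_sq hSy0]
  have hinner := hx' y hmem
  rw [hiv] at hinner
  have h6 : s * w < w ^ 2 := by nlinarith [mul_lt_mul_of_pos_right hsw hw0]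
  have hts : (((r:ℝ) - 1) * s + w) * s < (r:ℝ) * ((r:ℝ) - 1) * q := by nlinarith [h6, hw2]
  linarith

lemma centered_cs {r : ℕ} (x y : Fin r → ℝ) :
    ((r:ℝ) * ∑ i, x i * y i - (∑ i, x i) * (∑ i, y i))^2 ≤
    ((r:ℝ) * ∑ i, x i ^ 2 - (∑ i, x i)^2) * ((r:ℝ) * ∑ i, y i ^ 2 - (∑ i, y i)^2) := by
  set s := ∑ i, x i with hs
  set S := ∑ i, y i with hS
  set D := ∑ i, x i * y i with hD
  set q := ∑ i, x i ^ 2 with hq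
  set Q := ∑ i, y i ^ 2 with hQ
  have cs := Finset.sum_mul_sq_le_sq_mul_sq Finset.univ
      (fun i => (r:ℝ) * x i - s) (fun i => (r:ℝ) * y i - S)
  have e1 : ∑ i, ((r:ℝ) * x i - s) * ((r:ℝ) * y i - S)
      = (r:ℝ) * ((r:ℝ) * D - s * S) := by
    have : ∀ i : Fin r, ((r:ℝ) * x i - s) * ((r:ℝ) * y i - S)
        = (r:ℝ)^2 * (x i * y i) - (r:ℝ)*S * x i - (r:ℝ)*s * y i + s*S := by
      intro i; ring
    simp_rw [this, Finset.sum_add_distrib, Finset.sum_sub_distrib, ← Finset.mul_sum,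
      Finset.sum_const, Finset.card_univ, Fintype.card_fin, nsmul_eq_mul, ← hD, ← hs, ← hS]
    ring
  have e2 : ∑ i, ((r:ℝ) * x i - s) ^ 2 = (r:ℝ) * ((r:ℝ) * q - s^2) := by
    have : ∀ i : Fin r, ((r:ℝ) * x i - s)^2
        = (r:ℝ)^2 * (x i ^ 2) - 2*(r:ℝ)*s * x i + s^2 := by intro i; ring
    simp_rw [this, Finset.sum_add_distrib, Finset.sum_sub_distrib, ← Finset.mul_sum,
      Finset.sum_const, Finset.card_univ, Fintype.card_fin, nsmul_eq_mul, ← hq, ← hs]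
    ring
  have e3 : ∑ i, ((r:ℝ) * y i - S) ^ 2 = (r:ℝ) * ((r:ℝ) * Q - S^2) := by
    have : ∀ i : Fin r, ((r:ℝ) * y i - S)^2
        = (r:ℝ)^2 * (y i ^ 2) - 2*(r:ℝ)*S * y i + S^2 := by intro i; ring
    simp_rw [this, Finset.sum_add_distrib, Finset.sum_sub_distrib, ← Finset.mul_sum,
      Finset.sum_const, Finset.card_univ, Fintype.card_fin, nsmul_eq_mul, ← hQ, ← hS]
    ring
  simp only [e1, e2, e3] at cs
  rcases Nat.eq_zero_or_pos r with h0 | hpos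
  · subst h0; simp [hs, hS, hD]
  · have hr : (0:ℝ) < r := by exact_mod_cast hpos
    have h2 : (r:ℝ)^2 * (((r:ℝ) * D - s * S)^2) ≤
        (r:ℝ)^2 * (((r:ℝ) * q - s^2) * ((r:ℝ) * Q - S^2)) := by nlinarith [cs]
    exact le_of_mul_le_mul_left h2 (by positivity)

lemma key {r : ℕ} (hr : 1 ≤ r) (x y : Fin r → ℝ) (hx0 : ∀ i, 0 ≤ x i)
    (hx : Real.sqrt ((r:ℝ) - 1) * Real.sqrt (∑ i, x i ^ 2) ≤ ∑ i, x i)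
    (hy : Real.sqrt (∑ i, y i ^ 2) ≤ ∑ i, y i) :
    0 ≤ ∑ i, x i * y i := by
  have h1 : (0:ℝ) ≤ (r:ℝ) - 1 := by
    have : (1:ℝ) ≤ (r:ℝ) := by exact_mod_cast hr
    linarith
  set s := ∑ i, x i with hsdef
  set S := ∑ i, y i with hSdef
  set D := ∑ i, x i * y i with hDdef
  set q := ∑ i, x i ^ 2 with hqdef
  set Q := ∑ i, y i ^ 2 with hQdef
  have hq0 : 0 ≤ q := Finset.sum_nonneg fun i _ => sq_nonneg _
  have hQ0 : 0 ≤ Q := Finset.sum_nonneg fun i _ => sq_nonneg _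
  have hs0 : 0 ≤ s := Finset.sum_nonneg fun i _ => hx0 i
  have hS0 : 0 ≤ S := le_trans (Real.sqrt_nonneg _) hy
  have hQS : Q ≤ S^2 := by
    have h4 : (Real.sqrt Q)^2 ≤ S^2 := pow_le_pow_left₀ (Real.sqrt_nonneg _) hy 2
    rwa [Real.sq_sqrt hQ0] at h4
  have hxs : ((r:ℝ) - 1) * q ≤ s^2 := by
    have h4 : (Real.sqrt ((r:ℝ)-1) * Real.sqrt q)^2 ≤ s^2 :=
      pow_le_pow_left₀ (by positivity) hx 2
    have h2 := Real.sq_sqrt h1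
    have h3 := Real.sq_sqrt hq0
    nlinarith [h4]
  have cs1 : s^2 ≤ (r:ℝ) * q := by
    have h := Finset.sum_mul_sq_le_sq_mul_sq Finset.univ x (fun _ => (1:ℝ))
    simpa [Finset.card_univ, mul_comm] using h
  have cs2 : S^2 ≤ (r:ℝ) * Q := by
    have h := Finset.sum_mul_sq_le_sq_mul_sq Finset.univ y (fun _ => (1:ℝ))
    simpa [Finset.card_univ, mul_comm] using h
  have c1 := centered_cs x y
  simp only [← hsdef, ← hSdef, ← hDdef, ← hqdef, ← hQdef] at c1
  clear_value s S D q Q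
  rcases eq_or_lt_of_le h1 with heq | hlt
  · -- r = 1
    have hr1 : (r:ℝ) = 1 := by linarith
    have hrQ : (r:ℝ) * Q - S^2 = Q - S^2 := by rw [hr1]; ring
    have h7 : (r:ℝ) * Q - S^2 ≤ 0 := by rw [hrQ]; linarith
    have h8 : 0 ≤ (r:ℝ) * q - s^2 := by linarith
    have h9 : 0 ≤ (r:ℝ) * Q - S^2 := by linarith
    have hz : (r:ℝ) * Q - S^2 = 0 := le_antisymm h7 h9
    rw [hz, mul_zero] at c1
    have : (r:ℝ) * D = s * S := by nlinarith [c1, sq_nonneg ((r:ℝ)*D - s*S)]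
    rw [hr1, one_mul] at this
    exact this ▸ mul_nonneg hs0 hS0
  · -- r ≥ 2 (well, r-1 > 0)
    have h5 : ((r:ℝ)-1) * ((r:ℝ)*q - s^2) ≤ s^2 := by nlinarith [hxs]
    have h6 : (r:ℝ)*Q - S^2 ≤ ((r:ℝ)-1) * S^2 := by nlinarith [hQS]
    have h7 : 0 ≤ (r:ℝ)*q - s^2 := by linarith
    have h8 : 0 ≤ (r:ℝ)*Q - S^2 := by linarith
    have h9 : ((r:ℝ)-1) * (((r:ℝ)*q - s^2) * ((r:ℝ)*Q - S^2)) ≤ s^2 * (((r:ℝ)-1) * S^2) := by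
      rw [← mul_assoc]
      exact le_trans (mul_le_mul_of_nonneg_right h5 h8)
        (mul_le_mul_of_nonneg_left h6 (sq_nonneg s))
    have h10 : ((r:ℝ)*D - s*S)^2 ≤ (s*S)^2 := by
      have h11 : ((r:ℝ)-1) * (((r:ℝ)*D - s*S)^2) ≤ ((r:ℝ)-1) * ((s*S)^2) := by
        have e : s^2 * (((r:ℝ)-1) * S^2) = ((r:ℝ)-1) * ((s*S)^2) := by ring
        linarith [mul_le_mul_of_nonneg_left c1 h1, h9, e]
      exact le_of_mul_le_mul_left h11 hlt
    have h12 : -(s*S) ≤ (r:ℝ)*D - s*S :=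
      (abs_le_of_sq_le_sq' h10 (mul_nonneg hs0 hS0)).1
    have h13 : 0 ≤ (r:ℝ)*D := by linarith
    by_contra hD
    push_neg at hD
    have : (r:ℝ)*D < 0 := mul_neg_of_pos_of_neg (by linarith) hD
    linarith

def Set.innerDualCone {E : Type*} [NormedAddCommGroup E] [InnerProductSpace ℝ E] (s : Set E) :
    ConvexCone ℝ E where
  carrier := {y | ∀ x ∈ s, 0 ≤ ⟪x, y⟫}
  smul_mem' c hc y hy x hx := by
    rw [real_inner_smul_right]; exact mul_nonneg hc.le (hy x hx)
  add_mem' u hu v hv x hx := by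
    rw [inner_add_right]; exact add_nonneg (hu x hx) (hv x hx)

theorem mem_innerDualCone {E : Type*} [NormedAddCommGroup E] [InnerProductSpace ℝ E]
    (y : E) (s : Set E) : y ∈ s.innerDualCone ↔ ∀ x ∈ s, 0 ≤ ⟪x, y⟫ := Iff.rfl

theorem ConvexCone.innerDualCone_of_innerDualCone_eq_self {E : Type*} [NormedAddCommGroup E]
    [InnerProductSpace ℝ E] [CompleteSpace E] (K : ConvexCone ℝ E) (ne : (K : Set E).Nonempty)
    (hc : IsClosed (K : Set E)) :
    ((K : Set E).innerDualCone : Set E).innerDualCone = K := by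
  lift K to ProperCone ℝ E using ⟨ne, hc⟩
  have h := ProperCone.innerDual_innerDual K
  have hset : (((K : ConvexCone ℝ E) : Set E).innerDualCone : Set E)
      = (ProperCone.innerDual (K : Set E) : Set E) := rfl
  ext x
  rw [mem_innerDualCone, hset]
  change _ ↔ x ∈ K
  rw [show (x ∈ K) = (x ∈ ProperCone.innerDual (ProperCone.innerDual (K : Set E) : Set E)) by
    rw [h], ProperCone.mem_innerDual]

theorem stmt3 {r : ℕ} (hr : 1 ≤ r) :
    {y : Fin r → ℝ | ∀ x : Fin r → ℝ,
        ((∀ i, 0 ≤ x i) ∧ Real.sqrt ((r : ℝ) - 1) * Real.sqrt (∑ i, x i ^ 2) ≤ ∑ i, x i) →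
        0 ≤ ∑ i, x i * y i}
    = {y : Fin r → ℝ | Real.sqrt (∑ i, y i ^ 2) ≤ ∑ i, y i} := by
  have hnorm : ∀ a : EuclideanSpace ℝ (Fin r), ‖a‖ = Real.sqrt (∑ i, a i ^ 2) := by
    intro a
    rw [EuclideanSpace.norm_eq]
    congr 1
    refine Finset.sum_congr rfl fun i _ => ?_
    rw [Real.norm_eq_abs, sq_abs]
  have hinner : ∀ a b : EuclideanSpace ℝ (Fin r), ⟪a, b⟫ = ∑ i, a i * b i := by
    intro a b
    simp [PiLp.inner_apply, RCLike.inner_apply, conj_trivial]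
    exact Finset.sum_congr rfl fun i _ => mul_comm _ _
  set L : ConvexCone ℝ (EuclideanSpace ℝ (Fin r)) :=
    { carrier := {y : EuclideanSpace ℝ (Fin r) | ‖y‖ ≤ ∑ i, y i}
      smul_mem' := by
        intro c hc y hy
        simp only [Set.mem_setOf_eq] at hy ⊢
        have h1 : ‖c • y‖ = c * ‖y‖ := by
          rw [norm_smul, Real.norm_eq_abs, abs_of_pos hc]
        have h2 : ∀ i, (c • y) i = c * y i := fun i => rfl
        calc ‖c • y‖ = c * ‖y‖ := h1
          _ ≤ c * ∑ i, y i := by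
              exact mul_le_mul_of_nonneg_left hy hc.le
          _ = ∑ i, (c • y) i := by rw [Finset.mul_sum]; exact Finset.sum_congr rfl fun i _ => (h2 i).symm
      add_mem' := by
        intro y hy z hz
        simp only [Set.mem_setOf_eq] at hy hz ⊢
        have h2 : ∀ i, (y + z) i = y i + z i := fun i => rfl
        calc ‖y + z‖ ≤ ‖y‖ + ‖z‖ := norm_add_le y z
          _ ≤ (∑ i, y i) + (∑ i, z i) := add_le_add hy hz
          _ = ∑ i, (y + z) i := by
              rw [← Finset.sum_add_distrib]
              exact Finset.sum_congr rfl fun i _ => (h2 i).symm } with hLdef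
  have hLne : (L : Set (EuclideanSpace ℝ (Fin r))).Nonempty := by
    refine ⟨0, ?_⟩
    show ‖(0 : EuclideanSpace ℝ (Fin r))‖ ≤ ∑ i, (0 : EuclideanSpace ℝ (Fin r)) i
    simp
  have hLcl : IsClosed (L : Set (EuclideanSpace ℝ (Fin r))) := by
    have : (L : Set (EuclideanSpace ℝ (Fin r)))
        = {y : EuclideanSpace ℝ (Fin r) | ‖y‖ ≤ ∑ i, y i} := rfl
    rw [this]
    exact isClosed_le continuous_norm
      (continuous_finset_sum _ fun i _ => (EuclideanSpace.proj i).continuous)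
  have hbid := ConvexCone.innerDualCone_of_innerDualCone_eq_self L hLne hLcl
  have hLmem : ∀ a : EuclideanSpace ℝ (Fin r),
      a ∈ (L : Set (EuclideanSpace ℝ (Fin r))) ↔ Real.sqrt (∑ i, a i ^ 2) ≤ ∑ i, a i := by
    intro a
    have : a ∈ (L : Set (EuclideanSpace ℝ (Fin r))) ↔ ‖a‖ ≤ ∑ i, a i := Iff.rfl
    rw [this, hnorm a]
  have hdual : ((L : Set (EuclideanSpace ℝ (Fin r))).innerDualCone : Set (EuclideanSpace ℝ (Fin r)))
      = {x : EuclideanSpace ℝ (Fin r) |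
          (∀ i, 0 ≤ x i) ∧ Real.sqrt ((r : ℝ) - 1) * Real.sqrt (∑ i, x i ^ 2) ≤ ∑ i, x i} := by
    ext x
    rw [SetLike.mem_coe, mem_innerDualCone]
    constructor
    · intro h
      refine dual_sub hr x fun y hy => ?_
      have hyL : (WithLp.toLp 2 y : EuclideanSpace ℝ (Fin r)) ∈ (L : Set (EuclideanSpace ℝ (Fin r))) :=
        (hLmem (WithLp.toLp 2 y)).mpr hy
      have := h (WithLp.toLp 2 y) hyL
      rwa [hinner] at this
    · rintro ⟨hx0, hx⟩ y hy
      rw [hinner]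
      have hyn : Real.sqrt (∑ i, y i ^ 2) ≤ ∑ i, y i := (hLmem y).mp hy
      have hk := key hr x y hx0 hx hyn
      calc (0:ℝ) ≤ ∑ i, x i * y i := hk
        _ = ∑ i, y i * x i := Finset.sum_congr rfl fun i _ => mul_comm _ _
  ext y
  simp only [Set.mem_setOf_eq]
  have Y : EuclideanSpace ℝ (Fin r) := WithLp.toLp 2 y
  have hmem : (∀ x : Fin r → ℝ,
      ((∀ i, 0 ≤ x i) ∧ Real.sqrt ((r : ℝ) - 1) * Real.sqrt (∑ i, x i ^ 2) ≤ ∑ i, x i) →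
      0 ≤ ∑ i, x i * y i) ↔
      (id (WithLp.toLp 2 y) : EuclideanSpace ℝ (Fin r)) ∈
        (((L : Set (EuclideanSpace ℝ (Fin r))).innerDualCone :
          Set (EuclideanSpace ℝ (Fin r))).innerDualCone) := by
    rw [mem_innerDualCone]
    constructor
    · intro h x hx
      rw [hdual] at hx
      rw [hinner]
      exact h x hx
    · intro h x hx
      have hx' : (WithLp.toLp 2 x : EuclideanSpace ℝ (Fin r)) ∈
          ((L : Set (EuclideanSpace ℝ (Fin r))).innerDualCone :
            Set (EuclideanSpace ℝ (Fin r))) := by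
        rw [hdual]; exact hx
      have := h (WithLp.toLp 2 x) hx'
      rwa [hinner] at this
  rw [hmem, hbid, ← SetLike.mem_coe, hLmem]
  exact Iff.rfl
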